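/- The Pierce–Birkhoff conjecture holds if and only if for every n and every spline f : ℝ^n → ℝ there exist k ∈ ℕ and a linear spline ℓ : ℝ^{C(n+k,k)} → ℝ such that f = ℓ ∘ v_k, where v_k is the degree-k Veronese map. -/

import Mathlib

noncomputable section
/-- A continuous function `f : ℝ^ι → ℝ` is a (polynomial) spline of degree `k` if there are
polynomials `π_1, …, π_b`, each of total degree at most `k`, such that on every (nonempty) cell
of the induced semialgebraic sign partition, `f` agrees with a polynomial of degree at most `k`. -/
def IsSpline (ι : Type) [Fintype ι] (k : ℕ) (f : (ι → ℝ) → ℝ) : Prop :=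
  Continuous f ∧
  ∃ (b : ℕ) (π : Fin b → MvPolynomial ι ℝ),
    (∀ i, (π i).totalDegree ≤ k) ∧
    ∀ θ : Fin b → SignType,
      ∃ ξ : MvPolynomial ι ℝ, ξ.totalDegree ≤ k ∧
        ∀ x : ι → ℝ, (∀ i, SignType.sign (MvPolynomial.eval x (π i)) = θ i) →
          f x = MvPolynomial.eval x ξ

/-- The Pierce–Birkhoff conjecture (in every dimension): every spline `f : ℝ^n → ℝ` is a finite
max of finite mins of polynomials. -/
def PierceBirkhoff : Prop :=
  ∀ (n : ℕ) (f : (Fin n → ℝ) → ℝ), (∃ k, IsSpline (Fin n) k f) →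
    ∃ (m q : ℕ) (ξ : Fin (m + 1) → Fin (q + 1) → MvPolynomial (Fin n) ℝ),
      ∀ x, f x = ⨆ i, ⨅ j, MvPolynomial.eval x (ξ i j)

/-- The index set of the degree-`k` Veronese map in `n` variables: exponent vectors of total
degree at most `k`.  It has cardinality `C(n+k, k)`. -/
abbrev VeroneseIdx (n k : ℕ) : Type := { d : Fin n → Fin (k + 1) // ∑ i, (d i : ℕ) ≤ k }

/-- The degree-`k` Veronese map, sending `x` to the vector of all monomials of degree at most
`k` in `x_1, …, x_n` (including the constant monomial `1`). -/
def veronese (n k : ℕ) (x : Fin n → ℝ) : VeroneseIdx n k → ℝ :=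
  fun d => ∏ i, x i ^ (d.1 i : ℕ)

open MvPolynomial

namespace PBAux
set_option linter.unusedSectionVars false

/-! ### Generic helpers -/

lemma real_exists_sup {J : Type} [Finite J] [Nonempty J] (r : J → ℝ) :
    ∃ i, (⨆ j, r j) = r i ∧ ∀ j, r j ≤ r i := by
  obtain ⟨i, hi⟩ := Finite.exists_max r
  exact ⟨i, le_antisymm (ciSup_le hi) (le_ciSup (Set.finite_range r).bddAbove i), hi⟩

lemma real_exists_inf {J : Type} [Finite J] [Nonempty J] (r : J → ℝ) :
    ∃ i, (⨅ j, r j) = r i ∧ ∀ j, r i ≤ r j := by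
  obtain ⟨i, hi⟩ := Finite.exists_min r
  exact ⟨i, le_antisymm (ciInf_le (Set.finite_range r).bddBelow i) (le_ciInf hi), hi⟩

lemma cont_iSup {J E : Type} [Fintype J] [Nonempty J] [TopologicalSpace E] (g : J → E → ℝ)
    (hg : ∀ i, Continuous (g i)) : Continuous fun y => ⨆ i, g i y := by
  have h : (fun y => ⨆ i, g i y)
      = fun y => Finset.univ.sup' Finset.univ_nonempty (fun i => g i y) :=
    funext fun y => (Finset.sup'_univ_eq_ciSup _).symm
  rw [h]
  exact continuous_iff_continuousAt.mpr fun y =>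
    ContinuousAt.finset_sup'_apply _ (fun i _ => (hg i).continuousAt)

lemma cont_iInf {J E : Type} [Fintype J] [Nonempty J] [TopologicalSpace E] (g : J → E → ℝ)
    (hg : ∀ i, Continuous (g i)) : Continuous fun y => ⨅ i, g i y := by
  have h : (fun y => ⨅ i, g i y)
      = fun y => Finset.univ.inf' Finset.univ_nonempty (fun i => g i y) :=
    funext fun y => (Finset.inf'_univ_eq_ciInf _).symm
  rw [h]
  exact continuous_iff_continuousAt.mpr fun y =>
    ContinuousAt.finset_inf'_apply _ (fun i _ => (hg i).continuousAt)

lemma eval_cont {ι : Type} (p : MvPolynomial ι ℝ) :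
    Continuous fun x : ι → ℝ => eval x p := by
  induction p using MvPolynomial.induction_on with
  | C a => simpa using continuous_const
  | add p q hp hq => simp only [map_add]; exact hp.add hq
  | mul_X p i hp => simp only [map_mul, eval_X]; exact hp.mul (continuous_apply i)

lemma exp_classify {ι : Type} (d : ι →₀ ℕ) (hd : (d.sum fun _ e => e) ≤ 1) :
    d = 0 ∨ ∃ i, d = Finsupp.single i 1 := by
  classical
  rcases eq_or_ne d 0 with h | h
  · exact Or.inl h
  right
  obtain ⟨i, hi⟩ := Finsupp.support_nonempty_iff.mpr h
  have hi1 : 1 ≤ d i := Nat.one_le_iff_ne_zero.mpr (Finsupp.mem_support_iff.mp hi)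
  have hsum : ∑ j ∈ d.support, d j ≤ 1 := hd
  refine ⟨i, Finsupp.ext fun j => ?_⟩
  rcases eq_or_ne j i with rfl | hne
  · have : d j ≤ ∑ a ∈ d.support, d a :=
      Finset.single_le_sum (fun a _ => Nat.zero_le _) hi
    rw [Finsupp.single_eq_same]
    omega
  · have hz : Finsupp.single i 1 j = 0 := by
      simp [Finsupp.single_apply, if_neg (Ne.symm hne)]
    rw [hz]
    by_contra hj
    have hjs : j ∈ d.support := Finsupp.mem_support_iff.mpr hj
    have hsub : ({i, j} : Finset ι) ⊆ d.support := by
      intro a ha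
      rcases Finset.mem_insert.mp ha with rfl | ha
      · exact hi
      · rw [Finset.mem_singleton.mp ha]; exact hjs
    have hle := Finset.sum_le_sum_of_subset (f := fun a => d a) hsub
    rw [Finset.sum_pair (Ne.symm hne)] at hle
    have hle2 : d i + d j ≤ ∑ a ∈ d.support, d a := by simpa using hle
    have hj1 : 1 ≤ d j := Nat.one_le_iff_ne_zero.mpr hj
    omega

lemma affine_rep {ι : Type} [Fintype ι] (p : MvPolynomial ι ℝ) (hp : p.totalDegree ≤ 1) :
    ∃ (c : ℝ) (w : ι → ℝ), ∀ x : ι → ℝ, eval x p = c + ∑ i, w i * x i := by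
  classical
  refine ⟨p.coeff 0, fun i => p.coeff (Finsupp.single i 1), fun x => ?_⟩
  rw [eval_eq']
  set s : Finset (ι →₀ ℕ) :=
    insert 0 (Finset.image (fun i => Finsupp.single i 1) Finset.univ) with hs
  have hsub : p.support ⊆ s := by
    intro d hd
    rcases exp_classify d (le_trans (le_totalDegree hd) hp) with rfl | ⟨i, rfl⟩
    · exact Finset.mem_insert_self _ _
    · exact Finset.mem_insert_of_mem (Finset.mem_image.mpr ⟨i, Finset.mem_univ i, rfl⟩)
  rw [Finset.sum_subset hsub (fun d _ hd => by
    rw [MvPolynomial.notMem_support_iff.mp hd, zero_mul])]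
  have h0 : (0 : ι →₀ ℕ) ∉ Finset.image (fun i => Finsupp.single i 1) Finset.univ := by
    simp only [Finset.mem_image, not_exists]
    rintro i ⟨-, hi⟩
    have := DFunLike.congr_fun hi i
    simp at this
  rw [hs, Finset.sum_insert h0, Finset.sum_image (fun i _ j _ h => by
    have := DFunLike.congr_fun h i
    simp [Finsupp.single_apply] at this
    by_contra hne
    exact hne this.symm)]
  congr 1
  · simp
  · refine Finset.sum_congr rfl fun i _ => ?_
    congr 1
    have : ∀ j, x j ^ (Finsupp.single i 1) j = if i = j then x j else 1 := by
      intro j; rcases eq_or_ne i j with rfl | h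
      · simp
      · simp [Finsupp.single_apply, if_neg h]
    rw [Finset.prod_congr rfl fun j _ => this j, Finset.prod_ite_eq]
    simp

/-! ### The key one-dimensional lemma (Ovchinnikov-style segment argument) -/

lemma keyR {J : Type} [Finite J] (ψ : J → ℝ → ℝ)
    (haff : ∀ j, ∃ a c : ℝ, ∀ t, ψ j t = a * t + c)
    (F : ℝ → ℝ) (hF : Continuous F) (hsel : ∀ t, ∃ j, ψ j t = F t) :
    ∃ j, F 0 ≤ ψ j 0 ∧ ψ j 1 ≤ F 1 := by
  classical
  have hψc : ∀ j, Continuous (ψ j) := by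
    intro j
    obtain ⟨a, c, h⟩ := haff j
    have : ψ j = fun t => a * t + c := funext h
    rw [this]
    exact (continuous_const.mul continuous_id).add continuous_const
  set T : Set ℝ := {t | (0 ≤ t ∧ t ≤ 1) ∧ ∃ j, F t ≤ ψ j t ∧ ψ j 1 ≤ F 1} with hT
  have hT1 : (1 : ℝ) ∈ T := by
    obtain ⟨j, hj⟩ := hsel 1
    exact ⟨⟨zero_le_one, le_refl 1⟩, j, le_of_eq hj.symm, le_of_eq hj⟩
  have hTne : T.Nonempty := ⟨1, hT1⟩
  have hTbdd : BddBelow T := ⟨0, fun t ht => ht.1.1⟩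
  have hTclosed : IsClosed T := by
    have : T = ⋃ j : J, {t | (0 ≤ t ∧ t ≤ 1) ∧ F t ≤ ψ j t ∧ ψ j 1 ≤ F 1} := by
      ext t
      simp only [Set.mem_setOf_eq, Set.mem_iUnion, hT]
      constructor
      · rintro ⟨h1, j, h2, h3⟩; exact ⟨j, h1, h2, h3⟩
      · rintro ⟨j, h1, h2, h3⟩; exact ⟨h1, j, h2, h3⟩
    rw [this]
    refine isClosed_iUnion_of_finite fun j => ?_
    by_cases h : ψ j 1 ≤ F 1
    · have : {t | (0 ≤ t ∧ t ≤ 1) ∧ F t ≤ ψ j t ∧ ψ j 1 ≤ F 1}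
          = Set.Icc (0:ℝ) 1 ∩ {t | F t ≤ ψ j t} := by
        ext t; simp [Set.mem_Icc, h, and_assoc]
      rw [this]
      exact isClosed_Icc.inter (isClosed_le hF (hψc j))
    · have : {t | (0 ≤ t ∧ t ≤ 1) ∧ F t ≤ ψ j t ∧ ψ j 1 ≤ F 1} = ∅ := by
        ext t; simp [h]
      rw [this]; exact isClosed_empty
  set c := sInf T with hc
  have hcmem : c ∈ T := hTclosed.csInf_mem hTne hTbdd
  obtain ⟨⟨hc0, hc1⟩, j, hFj, hj1⟩ := hcmem
  rcases eq_or_lt_of_le hc0 with hzero | hcpos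
  · exact ⟨j, by rw [hzero]; exact hFj, hj1⟩
  exfalso
  have hnotmem : ∀ t, 0 ≤ t → t ≤ 1 → t < c → (∀ j', F t ≤ ψ j' t → ¬ ψ j' 1 ≤ F 1) := by
    intro t h0 h1 hlt j' hf hj'
    exact absurd (csInf_le hTbdd ⟨⟨h0, h1⟩, j', hf, hj'⟩) (not_le.mpr hlt)
  rcases lt_or_eq_of_le hFj with hlt | heq
  · have hopen : IsOpen {t | F t < ψ j t} := isOpen_lt hF (hψc j)
    have hmem : c ∈ {t | F t < ψ j t} := hlt
    obtain ⟨ε, hε, hball⟩ := Metric.isOpen_iff.mp hopen c hmem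
    set t' := max (c - ε / 2) (c / 2) with ht'
    have ht'lt : t' < c := max_lt (by linarith) (by linarith)
    have ht'pos : 0 < t' := lt_max_of_lt_right (by linarith)
    have ht'ball : t' ∈ Metric.ball c ε := by
      rw [Metric.mem_ball, Real.dist_eq, abs_sub_lt_iff]
      constructor
      · linarith
      · have : c - ε / 2 ≤ t' := le_max_left _ _
        linarith
    exact hnotmem t' ht'pos.le (by linarith) ht'lt j (le_of_lt (hball ht'ball)) hj1
  · set u : ℕ → ℝ := fun m => c - c / (m + 2) with hu
    have hum_lt : ∀ m, u m < c := by
      intro m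
      have : 0 < c / (m + 2) := by positivity
      simp only [hu]; linarith
    have hum_pos : ∀ m, 0 < u m := by
      intro m
      have h2 : c / (m + 2) < c := by
        rw [div_lt_iff₀ (by positivity)]
        nlinarith [Nat.cast_nonneg (α := ℝ) m]
      simp only [hu]; linarith
    have hum_le1 : ∀ m, u m ≤ 1 := fun m => le_trans (hum_lt m).le hc1
    choose jj hjj using fun m => hsel (u m)
    obtain ⟨l, hlinf⟩ := Finite.exists_infinite_fiber jj
    have hlinf : (jj ⁻¹' {l}).Infinite := Set.infinite_coe_iff.mp hlinf
    by_cases hl1 : ψ l 1 ≤ F 1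
    · obtain ⟨m, hm, -⟩ := hlinf.exists_gt 0
      have hml : jj m = l := hm
      exact hnotmem (u m) (hum_pos m).le (hum_le1 m) (hum_lt m) l
        (le_of_eq (by rw [← hml]; exact (hjj m).symm)) hl1
    · push_neg at hl1
      have hAc : ψ l c = F c := by
        by_contra hne
        have hopen : IsOpen {t | ψ l t ≠ F t} := (isClosed_eq (hψc l) hF).isOpen_compl
        obtain ⟨ε, hε, hball⟩ := Metric.isOpen_iff.mp hopen c hne
        obtain ⟨N, hN⟩ := exists_nat_gt (c / ε)
        obtain ⟨m, hm, hmN⟩ := hlinf.exists_gt N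
        have hml : jj m = l := hm
        have hdist : dist (u m) c < ε := by
          rw [Real.dist_eq, hu]
          have h1 : 0 < c / ((m : ℝ) + 2) := by positivity
          have h2 : c / ((m : ℝ) + 2) < ε := by
            rw [div_lt_iff₀ (by positivity)]
            have : c / ε < (m : ℝ) + 2 := by
              calc c / ε < N := hN
              _ ≤ m := by exact_mod_cast hmN.le
              _ < (m : ℝ) + 2 := by linarith
            calc c = (c / ε) * ε := by field_simp
            _ < ((m : ℝ) + 2) * ε := by exact mul_lt_mul_of_pos_right this hε
            _ = ε * ((m : ℝ) + 2) := by ring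
          rw [abs_sub_lt_iff]
          constructor <;> linarith
        have := hball hdist
        rw [← hml] at this
        exact this (hjj m)
      obtain ⟨aj, cj, hja⟩ := haff j
      obtain ⟨al, cl, hla⟩ := haff l
      have hclt1 : c < 1 := by
        rcases lt_or_eq_of_le hc1 with hlt2 | heq2
        · exact hlt2
        · exfalso; rw [heq2] at hAc; linarith [hAc.le]
      have heqc : al * c + cl = aj * c + cj := by
        calc al * c + cl = ψ l c := (hla c).symm
        _ = F c := hAc
        _ = ψ j c := heq
        _ = aj * c + cj := hja c
      have hdomj : aj * 1 + cj ≤ F 1 := by rw [← hja 1]; exact hj1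
      have hdoml : F 1 < al * 1 + cl := by rw [← hla 1]; exact hl1
      have h1 : 0 < (al - aj) * (1 - c) := by nlinarith
      have hal : aj < al := by nlinarith [h1]
      obtain ⟨m, hm, -⟩ := hlinf.exists_gt 0
      have hml : jj m = l := hm
      have hflt : F (u m) < ψ j (u m) := by
        have h2 : al * u m + cl < aj * u m + cj := by
          nlinarith [mul_pos (sub_pos.mpr hal) (sub_pos.mpr (hum_lt m))]
        calc F (u m) = ψ l (u m) := by rw [← hml]; exact (hjj m).symm
        _ = al * u m + cl := hla (u m)
        _ < aj * u m + cj := h2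
        _ = ψ j (u m) := (hja (u m)).symm
      exact hnotmem (u m) (hum_pos m).le (hum_le1 m) (hum_lt m) j hflt.le hj1

lemma key_poly {ι : Type} [Fintype ι] {J : Type} [Finite J] (G : J → MvPolynomial ι ℝ)
    (hdeg : ∀ θ, (G θ).totalDegree ≤ 1) (ℓ : (ι → ℝ) → ℝ) (hc : Continuous ℓ)
    (hsel : ∀ y, ∃ θ, eval y (G θ) = ℓ y) (x y : ι → ℝ) :
    ∃ θ, ℓ x ≤ eval x (G θ) ∧ eval y (G θ) ≤ ℓ y := by
  set z : ℝ → (ι → ℝ) := fun t i => x i + t * (y i - x i) with hz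
  have hz0 : z 0 = x := by funext i; simp [hz]
  have hz1 : z 1 = y := by funext i; simp [hz]
  have hzc : Continuous z := continuous_pi fun i =>
    continuous_const.add ((continuous_id.mul continuous_const))
  have haff : ∀ θ, ∃ a c : ℝ, ∀ t, eval (z t) (G θ) = a * t + c := by
    intro θ
    obtain ⟨c, w, hw⟩ := affine_rep (G θ) (hdeg θ)
    refine ⟨∑ i, w i * (y i - x i), c + ∑ i, w i * x i, fun t => ?_⟩
    rw [hw (z t)]
    have : ∀ i, w i * z t i = w i * x i + (w i * (y i - x i)) * t := by
      intro i; simp only [hz]; ring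
    rw [Finset.sum_congr rfl fun i _ => this i, Finset.sum_add_distrib, ← Finset.sum_mul]
    ring
  obtain ⟨θ, h0, h1⟩ := keyR (fun θ t => eval (z t) (G θ)) haff (fun t => ℓ (z t))
    (hc.comp hzc) (fun t => hsel (z t))
  rw [hz0] at h0
  rw [hz1] at h1
  exact ⟨θ, h0, h1⟩

/-! ### Veronese monomials and linearization -/

def vmon (n k : ℕ) : VeroneseIdx n k → MvPolynomial (Fin n) ℝ :=
  fun d => ∏ i, (X i : MvPolynomial (Fin n) ℝ) ^ (d.1 i : ℕ)

lemma eval_vmon (n k : ℕ) (x : Fin n → ℝ) (d : VeroneseIdx n k) :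
    eval x (vmon n k d) = veronese n k x d := by
  simp [vmon, veronese, map_prod, map_pow]

lemma eval_aeval_veronese (n k : ℕ) (p : MvPolynomial (VeroneseIdx n k) ℝ) (x : Fin n → ℝ) :
    eval x (aeval (vmon n k) p) = eval (veronese n k x) p := by
  induction p using MvPolynomial.induction_on with
  | C a => simp [MvPolynomial.algebraMap_eq]
  | add p q hp hq => rw [map_add, map_add, hp, hq, map_add]
  | mul_X p d hp => rw [map_mul, map_mul, hp, aeval_X, eval_vmon, map_mul, eval_X]

def vIdx (n k : ℕ) (d : Fin n →₀ ℕ) : VeroneseIdx n k :=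
  if h : (∑ i, d i) ≤ k then
    ⟨fun i => ⟨d i, Nat.lt_succ_of_le (le_trans
      (Finset.single_le_sum (fun j _ => Nat.zero_le (d j)) (Finset.mem_univ i)) h)⟩, by
        simpa using h⟩
  else ⟨fun _ => ⟨0, Nat.succ_pos k⟩, by simp⟩

lemma veronese_vIdx {n k : ℕ} {d : Fin n →₀ ℕ} (hd : (∑ i, d i) ≤ k) (x : Fin n → ℝ) :
    veronese n k x (vIdx n k d) = ∏ i, x i ^ d i := by
  simp [veronese, vIdx, dif_pos hd]

def Lin (n k : ℕ) (p : MvPolynomial (Fin n) ℝ) : MvPolynomial (VeroneseIdx n k) ℝ :=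
  ∑ d ∈ p.support, C (p.coeff d) * X (vIdx n k d)

lemma Lin_totalDegree (n k : ℕ) (p : MvPolynomial (Fin n) ℝ) :
    (Lin n k p).totalDegree ≤ 1 := by
  refine le_trans (totalDegree_finset_sum _ _) (Finset.sup_le fun d _ => ?_)
  refine le_trans (totalDegree_mul _ _) ?_
  simp [totalDegree_X]

lemma sum_univ_finsupp {n : ℕ} (d : Fin n →₀ ℕ) : d.sum (fun _ e => e) = ∑ i, d i :=
  Finsupp.sum_fintype d _ (fun _ => rfl)

lemma eval_Lin {n k : ℕ} {p : MvPolynomial (Fin n) ℝ} (hp : p.totalDegree ≤ k)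
    (x : Fin n → ℝ) : eval (veronese n k x) (Lin n k p) = eval x p := by
  rw [Lin, map_sum, eval_eq' x p]
  refine Finset.sum_congr rfl fun d hd => ?_
  have hdk : (∑ i, d i) ≤ k := by
    rw [← sum_univ_finsupp d]
    exact le_trans (le_totalDegree hd) hp
  rw [map_mul, eval_C, eval_X, veronese_vIdx hdk]

end PBAux

namespace PBAux

lemma ciSup_equiv {I B : Type} (e : I ≃ B) (g : B → ℝ) : (⨆ b, g b) = ⨆ i, g (e i) := by
  have h : (fun i => g (e i)) = g ∘ e := rfl
  rw [iSup, iSup, h, e.surjective.range_comp]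

lemma ciInf_equiv {I B : Type} (e : I ≃ B) (g : B → ℝ) : (⨅ b, g b) = ⨅ i, g (e i) := by
  have h : (fun i => g (e i)) = g ∘ e := rfl
  rw [iInf, iInf, h, e.surjective.range_comp]

lemma forward (hPB : PierceBirkhoff) :
    ∀ (n : ℕ) (f : (Fin n → ℝ) → ℝ), (∃ k, IsSpline (Fin n) k f) →
      ∃ (k : ℕ) (ℓ : (VeroneseIdx n k → ℝ) → ℝ),
        IsSpline (VeroneseIdx n k) 1 ℓ ∧ ∀ x, f x = ℓ (veronese n k x) := by
  intro n f hf
  obtain ⟨m, q, ξ, hξ⟩ := hPB n f hf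
  classical
  set k := Finset.univ.sup
    (fun p : Fin (m+1) × Fin (q+1) => (ξ p.1 p.2).totalDegree) with hk
  have hdle : ∀ i j, (ξ i j).totalDegree ≤ k := fun i j =>
    Finset.le_sup (f := fun p : Fin (m+1) × Fin (q+1) => (ξ p.1 p.2).totalDegree)
      (Finset.mem_univ (i, j))
  set L : Fin (m+1) → Fin (q+1) → MvPolynomial (VeroneseIdx n k) ℝ :=
    fun i j => Lin n k (ξ i j) with hL
  have hLdeg : ∀ i j, (L i j).totalDegree ≤ 1 := fun i j => Lin_totalDegree n k (ξ i j)
  have hLeval : ∀ i j x, eval (veronese n k x) (L i j) = eval x (ξ i j) :=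
    fun i j x => eval_Lin (hdle i j) x
  refine ⟨k, fun y => ⨆ i, ⨅ j, eval y (L i j), ⟨?_, ?_⟩, ?_⟩
  · exact cont_iSup _ fun i => cont_iInf _ fun j => eval_cont (L i j)
  · set P := (Fin (m+1) × Fin (q+1)) × (Fin (m+1) × Fin (q+1)) with hP
    set e : Fin (Fintype.card P) ≃ P := (Fintype.equivFin P).symm with he
    set pol : Fin (Fintype.card P) → MvPolynomial (VeroneseIdx n k) ℝ :=
      fun ib => L (e ib).1.1 (e ib).1.2 - L (e ib).2.1 (e ib).2.2 with hpol
    refine ⟨Fintype.card P, pol, fun ib =>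
      le_trans (totalDegree_sub _ _) (max_le (hLdeg _ _) (hLdeg _ _)), ?_⟩
    intro θ
    by_cases hne : ∃ x₀ : VeroneseIdx n k → ℝ, ∀ ib, SignType.sign (eval x₀ (pol ib)) = θ ib
    · obtain ⟨x₀, hx₀⟩ := hne
      have htrans : ∀ x, (∀ ib, SignType.sign (eval x (pol ib)) = θ ib) →
          ∀ p1 p2 : Fin (m+1) × Fin (q+1),
          eval x₀ (L p1.1 p1.2) ≤ eval x₀ (L p2.1 p2.2) →
          eval x (L p1.1 p1.2) ≤ eval x (L p2.1 p2.2) := by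
        intro x hx p1 p2 hle
        have hpe : pol (e.symm (p1, p2)) = L p1.1 p1.2 - L p2.1 p2.2 := by
          simp [hpol, Equiv.apply_symm_apply]
        have hs : SignType.sign (eval x (L p1.1 p1.2) - eval x (L p2.1 p2.2))
            = SignType.sign (eval x₀ (L p1.1 p1.2) - eval x₀ (L p2.1 p2.2)) := by
          rw [← map_sub (eval x), ← map_sub (eval x₀), ← hpe, hx _, hx₀ _]
        have h2 : eval x (L p1.1 p1.2) - eval x (L p2.1 p2.2) ≤ 0 := by
          rw [← sign_nonpos_iff, hs, sign_nonpos_iff]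
          exact sub_nonpos.mpr hle
        linarith
      obtain ⟨i₀, hi₀eq, hi₀max⟩ := real_exists_sup (fun i => ⨅ j, eval x₀ (L i j))
      obtain ⟨j₀, hj₀eq, hj₀min⟩ := real_exists_inf (fun j => eval x₀ (L i₀ j))
      refine ⟨L i₀ j₀, hLdeg i₀ j₀, fun x hx => ?_⟩
      show (⨆ i, ⨅ j, eval x (L i j)) = eval x (L i₀ j₀)
      have hrow : ∀ j, eval x (L i₀ j₀) ≤ eval x (L i₀ j) :=
        fun j => htrans x hx (i₀, j₀) (i₀, j) (hj₀min j)
      have hrowinf : (⨅ j, eval x (L i₀ j)) = eval x (L i₀ j₀) :=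
        le_antisymm (ciInf_le (Set.finite_range _).bddBelow j₀) (le_ciInf hrow)
      have hother : ∀ i, (⨅ j, eval x (L i j)) ≤ eval x (L i₀ j₀) := by
        intro i
        obtain ⟨ji, hjieq, hjimin⟩ := real_exists_inf (fun j => eval x₀ (L i j))
        have h3 : eval x₀ (L i ji) ≤ eval x₀ (L i₀ j₀) := by
          rw [← hjieq, ← hj₀eq]; exact hi₀max i
        exact le_trans (ciInf_le (Set.finite_range _).bddBelow ji)
          (htrans x hx (i, ji) (i₀, j₀) h3)
      refine le_antisymm (ciSup_le hother) ?_
      rw [← hrowinf]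
      exact le_ciSup (f := fun i => ⨅ j, eval x (L i j)) (Set.finite_range _).bddAbove i₀
    · exact ⟨L 0 0, hLdeg 0 0, fun x hx => absurd ⟨x, hx⟩ hne⟩
  · intro x
    rw [hξ x]
    exact iSup_congr fun i => iInf_congr fun j => (hLeval i j x).symm

lemma reverse
    (H : ∀ (n : ℕ) (f : (Fin n → ℝ) → ℝ), (∃ k, IsSpline (Fin n) k f) →
      ∃ (k : ℕ) (ℓ : (VeroneseIdx n k → ℝ) → ℝ),
        IsSpline (VeroneseIdx n k) 1 ℓ ∧ ∀ x, f x = ℓ (veronese n k x)) :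
    PierceBirkhoff := by
  intro n f hf
  classical
  obtain ⟨k, ℓ, ⟨hℓc, b, π, hπdeg, hcell⟩, hfac⟩ := H n f hf
  choose Gξ hGdeg hGcell using hcell
  haveI : Nonempty (Fin b → SignType) := ⟨fun _ => 0⟩
  set sgn : (VeroneseIdx n k → ℝ) → (Fin b → SignType) :=
    fun y i => SignType.sign (eval y (π i)) with hsgn
  have hact : ∀ y, eval y (Gξ (sgn y)) = ℓ y := fun y => (hGcell (sgn y) y (fun i => rfl)).symm
  have hkey : ∀ x y, ∃ θ, ℓ x ≤ eval x (Gξ θ) ∧ eval y (Gξ θ) ≤ ℓ y :=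
    key_poly Gξ hGdeg ℓ hℓc (fun y => ⟨sgn y, hact y⟩)
  set P : (VeroneseIdx n k → ℝ) → (Fin b → SignType) → MvPolynomial (VeroneseIdx n k) ℝ :=
    fun x θ => if ℓ x ≤ eval x (Gξ θ) then Gξ θ else Gξ (sgn x) with hPdef
  set Row : (((Fin b → SignType) → Bool) × (Fin b → SignType)) → (Fin b → SignType) →
      MvPolynomial (VeroneseIdx n k) ℝ :=
    fun s θ => if s.1 θ = true then Gξ θ else Gξ s.2 with hRowdef
  set pat : (VeroneseIdx n k → ℝ) → ((Fin b → SignType) → Bool) × (Fin b → SignType) :=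
    fun x => (fun θ => decide (ℓ x ≤ eval x (Gξ θ)), sgn x) with hpatdef
  have hRowP : ∀ x, Row (pat x) = P x := by
    intro x; funext θ
    by_cases h : ℓ x ≤ eval x (Gξ θ) <;> simp [hRowdef, hPdef, hpatdef, h]
  have hP1 : ∀ x θ, ∃ θ', P x θ = Gξ θ' ∧ ℓ x ≤ eval x (Gξ θ') := by
    intro x θ
    by_cases h : ℓ x ≤ eval x (Gξ θ)
    · exact ⟨θ, if_pos h, h⟩
    · exact ⟨sgn x, if_neg h, le_of_eq (hact x).symm⟩
  have hP2 : ∀ x y, (⨅ θ, eval y (P x θ)) ≤ ℓ y := by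
    intro x y
    obtain ⟨θs, h1, h2⟩ := hkey x y
    have heq : P x θs = Gξ θs := if_pos h1
    exact le_trans (ciInf_le (Set.finite_range _).bddBelow θs) (by rw [heq]; exact h2)
  have hP3 : ∀ y, (⨅ θ, eval y (P y θ)) = ℓ y := by
    intro y
    refine le_antisymm (hP2 y y) (le_ciInf fun θ => ?_)
    obtain ⟨θ', heq, hge⟩ := hP1 y θ
    rw [heq]; exact hge
  set R : (((Fin b → SignType) → Bool) × (Fin b → SignType)) → (Fin b → SignType) →
      MvPolynomial (VeroneseIdx n k) ℝ :=
    fun s => if h : ∃ x, pat x = s then Row s else P 0 with hRdef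
  have hR1 : ∀ s, ∃ x, R s = P x := by
    intro s
    by_cases h : ∃ x, pat x = s
    · obtain ⟨x, hx⟩ := h
      subst hx
      have hgen : ∃ x', pat x' = pat x := ⟨x, rfl⟩
      exact ⟨x, by simp only [hRdef, dif_pos hgen]; exact hRowP x⟩
    · exact ⟨0, by simp only [hRdef, dif_neg h]⟩
  have hR2 : ∀ y, R (pat y) = P y := by
    intro y
    have hgen : ∃ x', pat x' = pat y := ⟨y, rfl⟩
    simp only [hRdef, dif_pos hgen]
    exact hRowP y
  have hrep : ∀ y, ℓ y = ⨆ s, ⨅ θ, eval y (R s θ) := by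
    intro y
    refine le_antisymm ?_ (ciSup_le fun s => ?_)
    · have h1 : ℓ y = ⨅ θ, eval y (R (pat y) θ) := by rw [hR2]; exact (hP3 y).symm
      rw [h1]
      exact le_ciSup (f := fun s => ⨅ θ, eval y (R s θ)) (Set.finite_range _).bddAbove (pat y)
    · obtain ⟨x, hx⟩ := hR1 s
      rw [hx]
      exact hP2 x y
  obtain ⟨m, hm⟩ : ∃ m, Fintype.card ((((Fin b → SignType) → Bool) × (Fin b → SignType))) = m + 1 :=
    ⟨_ - 1, (Nat.succ_pred_eq_of_pos Fintype.card_pos).symm⟩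
  obtain ⟨q, hq⟩ : ∃ q, Fintype.card (Fin b → SignType) = q + 1 :=
    ⟨_ - 1, (Nat.succ_pred_eq_of_pos Fintype.card_pos).symm⟩
  set eQ : Fin (m+1) ≃ (((Fin b → SignType) → Bool) × (Fin b → SignType)) :=
    (Fintype.equivFinOfCardEq hm).symm with heQ
  set eJ : Fin (q+1) ≃ (Fin b → SignType) := (Fintype.equivFinOfCardEq hq).symm with heJ
  refine ⟨m, q, fun i j => aeval (vmon n k) (R (eQ i) (eJ j)), fun x => ?_⟩
  rw [hfac x, hrep (veronese n k x), ciSup_equiv eQ]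
  refine iSup_congr fun i => ?_
  rw [ciInf_equiv eJ]
  exact iInf_congr fun j => (eval_aeval_veronese n k (R (eQ i) (eJ j)) x).symm

end PBAux


/-- The Pierce–Birkhoff conjecture holds if and only if every spline `f : ℝ^n → ℝ` factors as
`f = ℓ ∘ v_k` for some `k` and some linear spline `ℓ`. -/
theorem pierceBirkhoff_iff_spline_factors_through_veronese :
    PierceBirkhoff ↔
      ∀ (n : ℕ) (f : (Fin n → ℝ) → ℝ), (∃ k, IsSpline (Fin n) k f) →
        ∃ (k : ℕ) (ℓ : (VeroneseIdx n k → ℝ) → ℝ),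
          IsSpline (VeroneseIdx n k) 1 ℓ ∧ ∀ x, f x = ℓ (veronese n k x) := by
  exact ⟨PBAux.forward, PBAux.reverse⟩
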